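/- Uniform upper bound on the regularisation parameter in the REG algorithm: suppose ∇𝒥 is Lipschitz continuous with constant L > 0, let 0 < η₁ ≤ η₂ < 1 and γ₀ > 0, and let (v_k), (γ_k), (s_k) be generated by the REG algorithm: (J(v_k)ᵀJ(v_k) + γ_k I) s_k = −J(v_k)ᵀ r(v_k); ρ_k = (𝒥(v_k) − 𝒥(v_k + s_k)) / (𝒥(v_k) − m_k(s_k)) with m_k(s) = (1/2)‖J(v_k)s + r(v_k)‖² + (γ_k/2)‖s‖²; v_{k+1} = v_k + s_k if ρ_k ≥ η₁ and v_{k+1} = v_k otherwise; γ_{k+1} = γ_k/2 if ρ_k ≥ η₂, γ_{k+1} = γ_k if η₁ ≤ ρ_k < η₂, and γ_{k+1} = 2γ_k otherwise. If ∇𝒥(v_k) ≠ 0 for all k, then γ_k ≤ max{ γ₀, 2L/(2 − η₂) } for every k. -/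

import Mathlib

open scoped RealInnerProductSpace


/-- Gradient formula for `v ↦ (1/2)‖r v‖²`. -/
lemma nlsObj_hasFDerivAt' {n m : ℕ}
    (r : EuclideanSpace ℝ (Fin n) → EuclideanSpace ℝ (Fin m)) (hr : ContDiff ℝ 1 r)
    (x : EuclideanSpace ℝ (Fin n)) :
    HasFDerivAt (fun v => (1 / 2 : ℝ) * ‖r v‖ ^ 2)
      ((innerSL ℝ) (ContinuousLinearMap.adjoint (fderiv ℝ r x) (r x))) x := by
  have hd : HasFDerivAt r (fderiv ℝ r x) x :=
    (hr.differentiable one_ne_zero x).hasFDerivAt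
  have h := (hd.inner ℝ hd).const_mul (1 / 2 : ℝ)
  have heq : (fun v => (1 / 2 : ℝ) * ‖r v‖ ^ 2) =
      fun v => (1 / 2 : ℝ) * ⟪r v, r v⟫ := by
    funext v; rw [real_inner_self_eq_norm_sq]
  rw [heq]
  refine h.congr_fderiv ?_
  ext u
  simp only [ContinuousLinearMap.coe_smul', Pi.smul_apply, ContinuousLinearMap.comp_apply,
    ContinuousLinearMap.prod_apply, fderivInnerCLM_apply, innerSL_apply_apply, smul_eq_mul,
    ContinuousLinearMap.adjoint_inner_left]
  rw [real_inner_comm ((fderiv ℝ r x) u) (r x)]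
  ring

/-- Descent lemma from a Lipschitz gradient. -/
lemma descent_lemma {E : Type*} [NormedAddCommGroup E] [InnerProductSpace ℝ E]
    (f : E → ℝ) (g : E → E) (L : ℝ) (hL : 0 ≤ L)
    (hf : ∀ x, HasFDerivAt f ((innerSL ℝ) (g x)) x)
    (hlip : ∀ v w, ‖g v - g w‖ ≤ L * ‖v - w‖)
    (x s : E) : f (x + s) ≤ f x + ⟪g x, s⟫ + L / 2 * ‖s‖ ^ 2 := by
  have hg_cont : Continuous g := by
    have : LipschitzWith (Real.toNNReal L) g := by
      apply LipschitzWith.of_dist_le_mul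
      intro a b
      rw [dist_eq_norm, dist_eq_norm, Real.coe_toNNReal L hL]
      exact hlip a b
    exact this.continuous
  set φ' : ℝ → ℝ := fun t => ⟪g (x + t • s), s⟫ with hφ'
  have hderiv : ∀ t ∈ Set.uIcc (0:ℝ) 1,
      HasDerivAt (fun t : ℝ => f (x + t • s)) (φ' t) t := by
    intro t _
    have hc : HasDerivAt (fun t : ℝ => x + t • s) s t := by
      simpa using ((hasDerivAt_id t).smul_const s).const_add x
    exact (hf (x + t • s)).comp_hasDerivAt t hc
  have hcont : Continuous φ' :=
    Continuous.inner (hg_cont.comp (by continuity)) continuous_const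
  have hint : IntervalIntegrable φ' MeasureTheory.volume 0 1 :=
    hcont.intervalIntegrable 0 1
  have hFTC : ∫ t in (0:ℝ)..1, φ' t = f (x + s) - f x := by
    have := intervalIntegral.integral_eq_sub_of_hasDerivAt hderiv hint
    simpa using this
  have hmono : ∫ t in (0:ℝ)..1, φ' t ≤
      ∫ t in (0:ℝ)..1, (⟪g x, s⟫ + L * ‖s‖ ^ 2 * t) := by
    apply intervalIntegral.integral_mono_on zero_le_one hint
    · exact (by continuity : Continuous fun t : ℝ => ⟪g x, s⟫ + L * ‖s‖ ^ 2 * t).intervalIntegrable 0 1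
    · intro t ht
      have h1 : φ' t - ⟪g x, s⟫ = ⟪g (x + t • s) - g x, s⟫ := by
        simp [hφ', inner_sub_left]
      have h2 : ⟪g (x + t • s) - g x, s⟫ ≤ ‖g (x + t • s) - g x‖ * ‖s‖ :=
        real_inner_le_norm _ _
      have h3 : ‖g (x + t • s) - g x‖ ≤ L * (t * ‖s‖) := by
        have := hlip (x + t • s) x
        simpa [norm_smul, abs_of_nonneg ht.1] using this
      nlinarith [norm_nonneg s]
  have hval : ∫ t in (0:ℝ)..1, (⟪g x, s⟫ + L * ‖s‖ ^ 2 * t) =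
      ⟪g x, s⟫ + L / 2 * ‖s‖ ^ 2 := by
    have hc : Continuous (fun t : ℝ => L * ‖s‖ ^ 2 * t) := by continuity
    rw [intervalIntegral.integral_add intervalIntegrable_const (hc.intervalIntegrable 0 1)]
    have h2 : ∫ t in (0:ℝ)..1, L * ‖s‖ ^ 2 * t = L * ‖s‖ ^ 2 * ∫ t in (0:ℝ)..1, t :=
      intervalIntegral.integral_const_mul _ _
    rw [h2, integral_id, intervalIntegral.integral_const]
    simp
    ring
  linarith [hmono.trans_eq hval, hFTC.symm.le]

/-- The nonlinear least-squares objective `𝒥(v) = (1/2)‖r(v)‖²`. -/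
noncomputable def nlsObj {n m : ℕ} (r : EuclideanSpace ℝ (Fin n) → EuclideanSpace ℝ (Fin m))
    (v : EuclideanSpace ℝ (Fin n)) : ℝ :=
  (1 / 2) * ‖r v‖ ^ 2

/-- The Jacobian `J(v)` of `r` at `v`, as a continuous linear map. -/
noncomputable def nlsJ {n m : ℕ} (r : EuclideanSpace ℝ (Fin n) → EuclideanSpace ℝ (Fin m))
    (v : EuclideanSpace ℝ (Fin n)) :
    EuclideanSpace ℝ (Fin n) →L[ℝ] EuclideanSpace ℝ (Fin m) :=
  fderiv ℝ r v

/-- The gradient `∇𝒥(v) = J(v)ᵀ r(v)`. -/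
noncomputable def nlsGrad {n m : ℕ} (r : EuclideanSpace ℝ (Fin n) → EuclideanSpace ℝ (Fin m))
    (v : EuclideanSpace ℝ (Fin n)) : EuclideanSpace ℝ (Fin n) :=
  ContinuousLinearMap.adjoint (nlsJ r v) (r v)

/-- Uniform upper bound on the regularisation parameter in the REG algorithm:
`γ_k ≤ max{γ₀, 2L/(2 − η₂)}` for every `k`. -/
theorem regularisation_parameter_uniform_upper_bound
    {n m : ℕ} (hn : 0 < n) (hm : 0 < m)
    (r : EuclideanSpace ℝ (Fin n) → EuclideanSpace ℝ (Fin m))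
    (hr : ContDiff ℝ 1 r)
    -- ∇𝒥 is Lipschitz continuous with constant L
    (L : ℝ) (hL : 0 < L)
    (hlip : ∀ v w, ‖nlsGrad r v - nlsGrad r w‖ ≤ L * ‖v - w‖)
    -- algorithm parameters: 0 < η₁ ≤ η₂ < 1, γ₀ > 0
    (η₁ η₂ γ₀ : ℝ) (hη₁ : 0 < η₁) (hη₁₂ : η₁ ≤ η₂) (hη₂ : η₂ < 1) (hγ₀ : 0 < γ₀)
    -- iterates of the REG algorithm
    (v s : ℕ → EuclideanSpace ℝ (Fin n)) (γ : ℕ → ℝ)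
    (hγinit : γ 0 = γ₀)
    (hstep : ∀ k, ContinuousLinearMap.adjoint (nlsJ r (v k)) (nlsJ r (v k) (s k)) + γ k • s k =
      -ContinuousLinearMap.adjoint (nlsJ r (v k)) (r (v k)))
    (mdl : ℕ → EuclideanSpace ℝ (Fin n) → ℝ)
    (hmdl : ∀ k sv, mdl k sv =
      (1 / 2) * ‖nlsJ r (v k) sv + r (v k)‖ ^ 2 + (γ k / 2) * ‖sv‖ ^ 2)
    (ρ : ℕ → ℝ)
    (hρ : ∀ k, ρ k = (nlsObj r (v k) - nlsObj r (v k + s k)) /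
      (nlsObj r (v k) - mdl k (s k)))
    (hvsucc : ∀ k, η₁ ≤ ρ k → v (k + 1) = v k + s k)
    (hvfail : ∀ k, ρ k < η₁ → v (k + 1) = v k)
    (hγvs : ∀ k, η₂ ≤ ρ k → γ (k + 1) = γ k / 2)
    (hγs : ∀ k, η₁ ≤ ρ k → ρ k < η₂ → γ (k + 1) = γ k)
    (hγu : ∀ k, ρ k < η₁ → γ (k + 1) = 2 * γ k)
    -- nonzero gradients along the iterates
    (hgrad : ∀ k, nlsGrad r (v k) ≠ 0) :
    ∀ k, γ k ≤ max γ₀ (2 * L / (2 - η₂)) := by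
  have h2η : (0:ℝ) < 2 - η₂ := by linarith
  have hf : ∀ x, HasFDerivAt (nlsObj r) ((innerSL ℝ) (nlsGrad r x)) x := by
    intro x
    exact nlsObj_hasFDerivAt' r hr x
  have hγpos : ∀ k, 0 < γ k := by
    intro k
    induction k with
    | zero => rw [hγinit]; exact hγ₀
    | succ k ih =>
      rcases lt_or_ge (ρ k) η₁ with h | h
      · rw [hγu k h]; linarith
      · rcases lt_or_ge (ρ k) η₂ with h' | h'
        · rw [hγs k h h']; exact ih
        · rw [hγvs k h']; linarith
  have key : ∀ k, L / (2 - η₂) ≤ γ k → η₂ ≤ ρ k := by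
    intro k hk
    have hγk : 0 < γ k := hγpos k
    have hL2 : L ≤ γ k * (2 - η₂) := (div_le_iff₀ h2η).mp hk
    have hs0 : s k ≠ 0 := by
      intro h0
      apply hgrad k
      have h1 := hstep k
      rw [h0] at h1
      simp only [map_zero, smul_zero, add_zero, eq_comm, neg_eq_zero] at h1
      simpa [nlsGrad] using h1
    have hB : (0:ℝ) < ‖s k‖ ^ 2 := pow_pos (norm_pos_iff.mpr hs0) 2
    have hA : (0:ℝ) ≤ ‖nlsJ r (v k) (s k)‖ ^ 2 := sq_nonneg _
    have hgs : ⟪nlsGrad r (v k), s k⟫ =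
        -(‖nlsJ r (v k) (s k)‖ ^ 2 + γ k * ‖s k‖ ^ 2) := by
      have h1 := congrArg (fun w => ⟪w, s k⟫) (hstep k)
      simp only [inner_add_left, real_inner_smul_left, inner_neg_left,
        ContinuousLinearMap.adjoint_inner_left, real_inner_self_eq_norm_sq] at h1
      simp only [nlsGrad]
      rw [ContinuousLinearMap.adjoint_inner_left]
      linarith
    have hJr : ⟪nlsJ r (v k) (s k), r (v k)⟫ = ⟪nlsGrad r (v k), s k⟫ := by
      rw [real_inner_comm (s k) (nlsGrad r (v k))]
      simp only [nlsGrad]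
      rw [ContinuousLinearMap.adjoint_inner_right]
    have hpred : nlsObj r (v k) - mdl k (s k) =
        (1 / 2) * ‖nlsJ r (v k) (s k)‖ ^ 2 + (γ k / 2) * ‖s k‖ ^ 2 := by
      rw [hmdl]
      have hexp : ‖nlsJ r (v k) (s k) + r (v k)‖ ^ 2 =
          ‖nlsJ r (v k) (s k)‖ ^ 2 + 2 * ⟪nlsJ r (v k) (s k), r (v k)⟫ + ‖r (v k)‖ ^ 2 :=
        norm_add_sq_real _ _
      simp only [nlsObj]
      rw [hexp, hJr, hgs]
      ring
    have predpos : 0 < nlsObj r (v k) - mdl k (s k) := by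
      rw [hpred]; nlinarith
    have hdesc := descent_lemma (nlsObj r) (nlsGrad r) L hL.le hf hlip (v k) (s k)
    rw [hρ k, le_div_iff₀ predpos, hpred]
    nlinarith [mul_nonneg hB.le (sub_nonneg.mpr hL2),
      mul_nonneg hA (by linarith : (0:ℝ) ≤ 2 - η₂)]
  intro k
  induction k with
  | zero => rw [hγinit]; exact le_max_left _ _
  | succ k ih =>
    rcases lt_or_ge (ρ k) η₁ with h | h
    · rw [hγu k h]
      have hsmall : γ k < L / (2 - η₂) := by
        by_contra hcon
        push_neg at hcon
        have := key k hcon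
        linarith
      have h2 : 2 * γ k ≤ 2 * L / (2 - η₂) := by
        rw [mul_div_assoc]
        linarith
      exact h2.trans (le_max_right _ _)
    · rcases lt_or_ge (ρ k) η₂ with h' | h'
      · rw [hγs k h h']; exact ih
      · rw [hγvs k h']
        have := hγpos k
        have h2 : γ k / 2 ≤ γ k := by linarith
        exact h2.trans ih
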